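/- arXiv:1011.5371 — 3 statements merged into one kernel-verified Lean document; each statement's English description precedes it below -/
import Mathlib

section
/- Consider the action of T^3 on S^3 × S^3 × S^3 ⊂ (ℂ²)³ given by (z₁,z₂,z₃)·((u₁,v₁),(u₂,v₂),(u₃,v₃)) = ((z₁z₂²u₁, z̄₁v₁), (z₂z₃²u₂, z̄₂v₂), (z̄₁z₃u₃, z̄₃v₃)). A point with all |vᵢ|² + |uᵢ|² = 1 has nontrivial stabilizer if and only if v₁ = v₂ = v₃ = 0, in which case the stabilizer is the cyclic group of order 3 generated by (ω,ω,ω) with ω = e^{2πi/3}. -/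
/-- The action (1) of Example 2: `(z₁,z₂,z₃)` sends
`((u₁,v₁),(u₂,v₂),(u₃,v₃))` to `((z₁z₂²u₁, z̄₁v₁),(z₂z₃²u₂, z̄₂v₂),(z̄₁z₃u₃, z̄₃v₃))`.
`FixesEx2 z u v` says that the torus element `z` fixes the point `(u,v)`. -/
def FixesEx2 (z u v : Fin 3 → ℂ) : Prop :=
  z 0 * (z 1) ^ 2 * u 0 = u 0 ∧ star (z 0) * v 0 = v 0 ∧
  z 1 * (z 2) ^ 2 * u 1 = u 1 ∧ star (z 1) * v 1 = v 1 ∧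
  star (z 0) * z 2 * u 2 = u 2 ∧ star (z 2) * v 2 = v 2

/-- Lemma 1: a point of `S³×S³×S³` has nontrivial stabilizer for the action above
iff `v₁ = v₂ = v₃ = 0`, in which case the stabilizer is `ℤ₃` generated by
`(ω,ω,ω)`, `ω = e^{2πi/3}`. -/
theorem stmt_0 (u v : Fin 3 → ℂ) (hsphere : ∀ i, ‖u i‖ ^ 2 + ‖v i‖ ^ 2 = 1)
    (ω : ℂ) (hω : ω = Complex.exp (2 * Real.pi * Complex.I / 3)) :
    ((∃ z : Fin 3 → ℂ, (∀ i, ‖z i‖ = 1) ∧ z ≠ (fun _ => 1) ∧ FixesEx2 z u v) ↔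
      (v 0 = 0 ∧ v 1 = 0 ∧ v 2 = 0)) ∧
    ((v 0 = 0 ∧ v 1 = 0 ∧ v 2 = 0) →
      {z : Fin 3 → ℂ | (∀ i, ‖z i‖ = 1) ∧ FixesEx2 z u v} =
        {fun _ => 1, fun _ => ω, fun _ => ω ^ 2}) := by
  -- basic facts about ω
  have hω3 : ω ^ 3 = 1 := by
    rw [hω, ← Complex.exp_nat_mul,
      show ((3:ℕ):ℂ) * (2*Real.pi*Complex.I/3) = 2*Real.pi*Complex.I by push_cast; ring]
    exact Complex.exp_two_pi_mul_I
  have hω1 : ω ≠ 1 := by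
    rw [hω, show (2*(Real.pi:ℂ)*Complex.I/3) = ((2*Real.pi/3 : ℝ):ℂ) * Complex.I by
      push_cast; ring]
    intro h
    have him := congrArg Complex.im h
    rw [Complex.exp_ofReal_mul_I_im] at him
    simp at him
    have : Real.sin (2*Real.pi/3) > 0 :=
      Real.sin_pos_of_pos_of_lt_pi (by positivity) (by nlinarith [Real.pi_pos])
    linarith
  have hωnorm : ‖ω‖ = 1 := by
    have h3 : ‖ω‖ ^ 3 = 1 := by rw [← norm_pow, hω3, norm_one]
    nlinarith [norm_nonneg ω, sq_nonneg (‖ω‖ - 1), sq_nonneg (‖ω‖ + 1), sq_nonneg ‖ω‖]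
  have hωstar : star ω * ω = 1 := by
    have hns := Complex.normSq_eq_norm_sq ω
    rw [hωnorm] at hns
    rw [Complex.star_def, mul_comm, Complex.mul_conj, hns]
    norm_num
  have hsum : 1 + ω + ω ^ 2 = 0 := by
    have h : (ω - 1) * (1 + ω + ω ^ 2) = 0 := by linear_combination hω3
    rcases mul_eq_zero.1 h with h' | h'
    · exact absurd (sub_eq_zero.1 h') hω1
    · exact h'
  -- helpers
  have hnz : ∀ i, v i = 0 → u i ≠ 0 := by
    intro i hv hu
    have := hsphere i
    rw [hv, hu] at this; simp at this
  have cancel : ∀ {a w : ℂ}, w ≠ 0 → a * w = w → a = 1 := by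
    intro a w hw h
    exact mul_right_cancel₀ hw (h.trans (one_mul w).symm)
  have hstar1 : ∀ {a : ℂ}, star a = 1 → a = 1 := by
    intro a h
    simpa using congrArg star h
  constructor
  · constructor
    · rintro ⟨z, hz, hzne, h0, h1, h2, h3, h4, h5⟩
      by_contra hcon
      apply hzne
      have hz0star : z 0 * star (z 0) = 1 := by
        have hns := Complex.normSq_eq_norm_sq (z 0)
        rw [hz 0] at hns
        rw [Complex.star_def, Complex.mul_conj, hns]
        norm_num
      have f0 : v 0 ≠ 0 → z 0 = 1 := fun h => hstar1 (cancel h h1)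
      have f1 : v 1 ≠ 0 → z 1 = 1 := fun h => hstar1 (cancel h h3)
      have f2 : v 2 ≠ 0 → z 2 = 1 := fun h => hstar1 (cancel h h5)
      have e0 : v 0 = 0 → z 0 * z 1 ^ 2 = 1 := fun h => cancel (hnz 0 h) h0
      have e1 : v 1 = 0 → z 1 * z 2 ^ 2 = 1 := fun h => cancel (hnz 1 h) h2
      have e2 : v 2 = 0 → z 2 = z 0 := by
        intro h
        have hc := cancel (hnz 2 h) h4
        calc z 2 = z 0 * star (z 0) * z 2 := by rw [hz0star, one_mul]
          _ = z 0 * (star (z 0) * z 2) := by ring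
          _ = z 0 := by rw [hc, mul_one]
      have key : z 0 = 1 ∧ z 1 = 1 ∧ z 2 = 1 := by
        by_cases hv0 : v 0 = 0
        · have E0 := e0 hv0
          by_cases hv1 : v 1 = 0
          · have hv2 : v 2 ≠ 0 := fun h => hcon ⟨hv0, hv1, h⟩
            have hz2 := f2 hv2
            have hz1 : z 1 = 1 := by
              have := e1 hv1; rw [hz2] at this; simpa using this
            have hz0 : z 0 = 1 := by rw [hz1] at E0; simpa using E0
            exact ⟨hz0, hz1, hz2⟩
          · have hz1 := f1 hv1
            have hz0 : z 0 = 1 := by rw [hz1] at E0; simpa using E0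
            by_cases hv2 : v 2 = 0
            · exact ⟨hz0, hz1, (e2 hv2).trans hz0⟩
            · exact ⟨hz0, hz1, f2 hv2⟩
        · have hz0 := f0 hv0
          by_cases hv2 : v 2 = 0
          · have hz2 := (e2 hv2).trans hz0
            by_cases hv1 : v 1 = 0
            · have := e1 hv1; rw [hz2] at this
              exact ⟨hz0, by simpa using this, hz2⟩
            · exact ⟨hz0, f1 hv1, hz2⟩
          · have hz2 := f2 hv2
            by_cases hv1 : v 1 = 0
            · have := e1 hv1; rw [hz2] at this
              exact ⟨hz0, by simpa using this, hz2⟩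
            · exact ⟨hz0, f1 hv1, hz2⟩
      funext i
      fin_cases i
      · exact key.1
      · exact key.2.1
      · exact key.2.2
    · rintro ⟨hv0, hv1, hv2⟩
      refine ⟨fun _ => ω, fun i => hωnorm, ?_, ?_, ?_, ?_, ?_, ?_, ?_⟩
      · intro h
        exact hω1 (congrFun h 0)
      · linear_combination (u 0) * hω3
      · rw [hv0, mul_zero]
      · linear_combination (u 1) * hω3
      · rw [hv1, mul_zero]
      · rw [show star ω * ω * u 2 = (star ω * ω) * u 2 by ring, hωstar, one_mul]
      · rw [hv2, mul_zero]
  · rintro ⟨hv0, hv1, hv2⟩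
    ext z
    simp only [Set.mem_setOf_eq, Set.mem_insert_iff, Set.mem_singleton_iff]
    constructor
    · rintro ⟨hz, h0, h1, h2, h3, h4, h5⟩
      have hz0star : z 0 * star (z 0) = 1 := by
        have hns := Complex.normSq_eq_norm_sq (z 0)
        rw [hz 0] at hns
        rw [Complex.star_def, Complex.mul_conj, hns]
        norm_num
      have hz0ne : z 0 ≠ 0 := by
        intro h; rw [h] at hz0star; simp at hz0star
      have hz1ne : z 1 ≠ 0 := by
        intro h
        have := hz 1; rw [h] at this; simp at this
      have E0 : z 0 * z 1 ^ 2 = 1 := cancel (hnz 0 hv0) h0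
      have E1 : z 1 * z 2 ^ 2 = 1 := cancel (hnz 1 hv1) h2
      have E2 : z 2 = z 0 := by
        have hc := cancel (hnz 2 hv2) h4
        calc z 2 = z 0 * star (z 0) * z 2 := by rw [hz0star, one_mul]
          _ = z 0 * (star (z 0) * z 2) := by ring
          _ = z 0 := by rw [hc, mul_one]
      rw [E2] at E1
      have heq : z 1 = z 0 := by
        have h : z 0 * z 1 * (z 1 - z 0) = 0 := by linear_combination E0 - E1
        rcases mul_eq_zero.1 h with h' | h'
        · exact absurd h' (mul_ne_zero hz0ne hz1ne)
        · exact sub_eq_zero.1 h'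
      have hcube : z 0 ^ 3 = 1 := by
        rw [heq] at E0; linear_combination E0
      have htri : z 0 = 1 ∨ z 0 = ω ∨ z 0 = ω ^ 2 := by
        have h : (z 0 - 1) * (z 0 - ω) * (z 0 - ω ^ 2) = 0 := by
          linear_combination hcube - (z 0)^2 * hsum + (z 0) * hsum + (z 0 - 1) * hω3
        rcases mul_eq_zero.1 h with h' | h'
        · rcases mul_eq_zero.1 h' with h'' | h''
          · exact Or.inl (sub_eq_zero.1 h'')
          · exact Or.inr (Or.inl (sub_eq_zero.1 h''))
        · exact Or.inr (Or.inr (sub_eq_zero.1 h'))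
      have hfun : ∀ c : ℂ, z 0 = c → z = (fun _ => c) := by
        intro c hc
        funext i
        fin_cases i
        · exact hc
        · exact heq.trans hc
        · exact E2.trans hc
      rcases htri with h | h | h
      · exact Or.inl (hfun 1 h)
      · exact Or.inr (Or.inl (hfun ω h))
      · exact Or.inr (Or.inr (hfun (ω^2) h))
    · have hω2norm : ‖ω ^ 2‖ = 1 := by rw [norm_pow, hωnorm]; norm_num
      have hω2star : star (ω ^ 2) * ω ^ 2 = 1 := by
        rw [star_pow, show star ω ^ 2 * ω ^ 2 = (star ω * ω)^2 by ring, hωstar]; norm_num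
      rintro (h | h | h) <;> subst h
      · exact ⟨fun i => norm_one, by simp, by rw [hv0]; simp, by simp,
          by rw [hv1]; simp, by simp, by rw [hv2]; simp⟩
      · refine ⟨fun i => hωnorm, ?_, by rw [hv0, mul_zero], ?_, by rw [hv1, mul_zero],
          ?_, by rw [hv2, mul_zero]⟩
        · linear_combination (u 0) * hω3
        · linear_combination (u 1) * hω3
        · rw [show star ω * ω * u 2 = (star ω * ω) * u 2 by ring, hωstar, one_mul]
      · refine ⟨fun i => hω2norm, ?_, by rw [hv0, mul_zero], ?_, by rw [hv1, mul_zero],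
          ?_, by rw [hv2, mul_zero]⟩
        · linear_combination (u 0 * (ω^3 + 1)) * hω3
        · linear_combination (u 1 * (ω^3 + 1)) * hω3
        · rw [show star (ω^2) * ω^2 * u 2 = (star (ω^2) * ω^2) * u 2 by ring, hω2star, one_mul]
end

section
/- Substituting the functions h(t) = r(t)·√(1−φ(r(t))) and f(t) = r(t), where dt = dr/√(1−φ(r)), into the doubly warped Ricci formulas Ric(X₀,X₀) = −h''/h − (2n−2)f''/f, Ric(X₁,X₁) = −h''/h − (2n−2)f'h'/(fh) + (2n−2)h²/f⁴, Ric(X₂,X₂) = −f''/f − f'h'/(fh) − (2n−3)(f')²/f² + 2n/f² − 2h²/f⁴, yields Ric(X₀,X₀) = Ric(X₁,X₁) = (1/2)(φ'' + (2n+1)φ'/r) and Ric(X₂,X₂) = φ'/r + 2nφ/r² (derivatives of φ with respect to r). -/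
open Real Filter Topology

private lemma sqrt_comp_deriv (φ r : ℝ → ℝ) (hφd : Differentiable ℝ φ)
    (hr : ∀ t, HasDerivAt r (Real.sqrt (1 - φ (r t))) t)
    (u : ℝ) (hu : φ (r u) < 1) :
    HasDerivAt (fun x => Real.sqrt (1 - φ (r x))) (-(deriv φ (r u)) / 2) u := by
  have hpos : (0:ℝ) < 1 - φ (r u) := by linarith
  have hs : 0 < Real.sqrt (1 - φ (r u)) := Real.sqrt_pos.mpr hpos
  have hg : HasDerivAt (fun x => 1 - φ (r x))
      (-(deriv φ (r u) * Real.sqrt (1 - φ (r u)))) u := by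
    have hcomp : HasDerivAt (fun x => φ (r x))
        (deriv φ (r u) * Real.sqrt (1 - φ (r u))) u :=
      (hφd (r u)).hasDerivAt.comp u (hr u)
    simpa using hcomp.const_sub 1
  have hsq := (Real.hasDerivAt_sqrt hpos.ne').comp u hg
  refine hsq.congr_deriv ?_
  field_simp

/-- Substituting `f(t) = r(t)` and `h(t) = r(t)√(1−φ(r(t)))`, where the
reparametrization satisfies `dr/dt = √(1−φ(r))`, into the doubly warped Ricci
formulas (3) yields the Ricci formulas of the ansatz (4):
`Ric(X₀,X₀) = Ric(X₁,X₁) = (1/2)(φ'' + (2n+1)φ'/r)` and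
`Ric(X₂,X₂) = φ'/r + 2nφ/r²`. -/
theorem stmt_10 (n : ℕ) (hn : 1 ≤ n)
    (φ : ℝ → ℝ) (hφ : ContDiff ℝ 2 φ)
    (r : ℝ → ℝ) (hr : ∀ t, HasDerivAt r (Real.sqrt (1 - φ (r t))) t)
    (f h : ℝ → ℝ) (hf : f = r)
    (hh : h = fun t => r t * Real.sqrt (1 - φ (r t))) :
    ∀ t : ℝ, 0 < r t → φ (r t) < 1 →
      (-(deriv (deriv h) t) / h t - (2 * n - 2) * (deriv (deriv f) t) / f t
          = (1 / 2) * (deriv (deriv φ) (r t) + (2 * n + 1) * deriv φ (r t) / r t)) ∧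
      (-(deriv (deriv h) t) / h t - (2 * n - 2) * (deriv f t * deriv h t) / (f t * h t)
          + (2 * n - 2) * (h t) ^ 2 / (f t) ^ 4
          = (1 / 2) * (deriv (deriv φ) (r t) + (2 * n + 1) * deriv φ (r t) / r t)) ∧
      (-(deriv (deriv f) t) / f t - (deriv f t * deriv h t) / (f t * h t)
          - (2 * n - 3) * (deriv f t) ^ 2 / (f t) ^ 2 + 2 * n / (f t) ^ 2
          - 2 * (h t) ^ 2 / (f t) ^ 4
          = deriv φ (r t) / r t + 2 * n * φ (r t) / (r t) ^ 2) := by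
  subst hh
  subst hf
  have hφd : Differentiable ℝ φ := hφ.differentiable two_ne_zero
  have hφ'd : Differentiable ℝ (deriv φ) := by
    have h2 : ContDiff ℝ (1+1) φ := by norm_num [hφ]
    exact (contDiff_succ_iff_deriv.mp h2).2.2.differentiable one_ne_zero
  have hrd : Differentiable ℝ f := fun u => (hr u).differentiableAt
  intro t hrt hφt
  set s : ℝ := Real.sqrt (1 - φ (f t)) with hsdef
  have hpos : (0:ℝ) < 1 - φ (f t) := by linarith
  have hs : 0 < s := Real.sqrt_pos.mpr hpos
  have hs2 : s ^ 2 = 1 - φ (f t) := Real.sq_sqrt hpos.le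
  have hP : φ (f t) = 1 - s ^ 2 := by rw [hs2]; ring
  -- first derivative of f
  have hdr : deriv f = fun u => Real.sqrt (1 - φ (f u)) := funext fun u => (hr u).deriv
  have hdr_t : deriv f t = s := by rw [hdr]
  -- second derivative of f
  have hddr : deriv (deriv f) t = -(deriv φ (f t)) / 2 := by
    rw [hdr]; exact (sqrt_comp_deriv φ f hφd hr t hφt).deriv
  -- eventual neighborhood where φ(f u) < 1
  have hev : ∀ᶠ u in 𝓝 t, φ (f u) < 1 :=
    ((hφd.continuous.comp hrd.continuous).continuousAt).eventually_lt
      continuousAt_const hφt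
  -- derivative of h on the neighborhood
  have hdh : ∀ u, φ (f u) < 1 →
      HasDerivAt (fun x => f x * Real.sqrt (1 - φ (f x)))
        ((1 - φ (f u)) - f u * deriv φ (f u) / 2) u := by
    intro u hu
    have hm := (hr u).mul (sqrt_comp_deriv φ f hφd hr u hu)
    have hss : Real.sqrt (1 - φ (f u)) * Real.sqrt (1 - φ (f u)) = 1 - φ (f u) :=
      Real.mul_self_sqrt (by linarith)
    refine hm.congr_deriv ?_
    rw [hss]; ring
  have hdh_t : deriv (fun x => f x * Real.sqrt (1 - φ (f x))) t
      = s ^ 2 - f t * deriv φ (f t) / 2 := by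
    rw [(hdh t hφt).deriv, hs2]
  -- second derivative of h
  have heq : deriv (fun x => f x * Real.sqrt (1 - φ (f x)))
      =ᶠ[𝓝 t] fun u => (1 - φ (f u)) - f u * deriv φ (f u) / 2 :=
    hev.mono fun u hu => (hdh u hu).deriv
  have hB : HasDerivAt (fun u => (1 - φ (f u)) - f u * deriv φ (f u) / 2)
      (-(deriv φ (f t)) * s - (s * deriv φ (f t) + f t * (deriv (deriv φ) (f t) * s)) / 2) t := by
    have h1 : HasDerivAt (fun x => 1 - φ (f x)) (-(deriv φ (f t) * s)) t := by
      have hcomp : HasDerivAt (fun x => φ (f x)) (deriv φ (f t) * s) t :=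
        (hφd (f t)).hasDerivAt.comp t (hr t)
      simpa using hcomp.const_sub 1
    have h2 : HasDerivAt (fun x => f x * deriv φ (f x))
        (s * deriv φ (f t) + f t * (deriv (deriv φ) (f t) * s)) t :=
      (hr t).mul ((hφ'd (f t)).hasDerivAt.comp t (hr t))
    have := h1.sub (h2.div_const 2)
    refine this.congr_deriv ?_
    ring
  have hddh : deriv (deriv (fun x => f x * Real.sqrt (1 - φ (f x)))) t
      = -(deriv φ (f t)) * s - (s * deriv φ (f t) + f t * (deriv (deriv φ) (f t) * s)) / 2 := by
    rw [heq.deriv_eq]; exact hB.deriv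
  have hh_t : f t * Real.sqrt (1 - φ (f t)) = f t * s := rfl
  refine ⟨?_, ?_, ?_⟩ <;>
    simp only [hddh, hddr, hdr_t, hdh_t, hh_t, hP, sub_sub_cancel, Real.sqrt_sq hs.le] <;>
    field_simp <;>
    ring
end

section
/- For φ(r) = r^{-2n}(1 + ∫₁^r ψ(s)s^{2n-1} ds) with ψ continuous and ψ(1) = 0, the functions f(t) = r(t) and h(t) = r(t)√(1−φ(r(t))) (with dt = dr/√(1−φ(r))) satisfy at r = 1: (d/dt)f = 0 and (d/dt)h = −φ'(1)/2 = n. -/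
open Filter

/-- Smoothness criterion at `r = 1`: for
`φ(r) = r^{-2n}(1 + ∫₁^r ψ(s)s^{2n-1} ds)` with `ψ` continuous and `ψ(1) = 0`,
we have `φ(1) = 1`, `φ'(1) = −2n`, and with respect to the arclength parameter
`t` (`dt = dr/√(1−φ(r))`) the warping functions `f(t) = r(t)` and
`h(t) = r(t)√(1−φ(r(t)))` satisfy at `r = 1`:
`df/dt = √(1−φ(r)) → 0` and `dh/dt = (1−φ(r)) − r·φ'(r)/2 → −φ'(1)/2 = n`
as `r → 1⁺`. -/
theorem stmt_11 (n : ℕ) (hn : 1 ≤ n)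
    (ψ : ℝ → ℝ) (hψ : Continuous ψ) (hψ1 : ψ 1 = 0)
    (φ : ℝ → ℝ)
    (hφ : ∀ r, φ r = (1 + ∫ s in (1:ℝ)..r, ψ s * s ^ (2 * n - 1)) / r ^ (2 * n)) :
    φ 1 = 1 ∧ deriv φ 1 = -(2 * n) ∧
    Filter.Tendsto (fun r => Real.sqrt (1 - φ r)) (nhdsWithin 1 (Set.Ioi 1)) (nhds 0) ∧
    Filter.Tendsto (fun r => (1 - φ r) - r * deriv φ r / 2)
      (nhdsWithin 1 (Set.Ioi 1)) (nhds n) ∧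
    -(deriv φ 1) / 2 = n := by
  set F : ℝ → ℝ := fun x => 1 + ∫ s in (1:ℝ)..x, ψ s * s ^ (2 * n - 1) with hFdef
  have hcont : Continuous fun s : ℝ => ψ s * s ^ (2 * n - 1) :=
    hψ.mul (continuous_pow _)
  have hF : ∀ r : ℝ, HasDerivAt F (ψ r * r ^ (2 * n - 1)) r := by
    intro r
    have h := intervalIntegral.integral_hasDerivAt_right
      (hcont.intervalIntegrable 1 r)
      (hcont.stronglyMeasurableAtFilter _ _) hcont.continuousAt
    exact h.const_add 1
  have hF1 : F 1 = 1 := by simp [hFdef]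
  have hφfun : φ = fun r => F r / r ^ (2 * n) := funext fun r => hφ r
  have hφ1 : φ 1 = 1 := by rw [hφ]; simp
  have hD : ∀ r : ℝ, r ≠ 0 → HasDerivAt φ
      ((ψ r * r ^ (2 * n - 1) * r ^ (2 * n) -
        F r * ((2 * n : ℕ) * r ^ (2 * n - 1))) / (r ^ (2 * n)) ^ 2) r := by
    intro r hr
    rw [hφfun]
    exact (hF r).div (hasDerivAt_pow (2 * n) r) (pow_ne_zero _ hr)
  have hderiv1 : deriv φ 1 = -(2 * n) := by
    rw [(hD 1 one_ne_zero).deriv]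
    simp [hψ1, hF1]
  have hφc : ContinuousAt φ 1 := (hD 1 one_ne_zero).continuousAt
  have hsub : ContinuousAt (fun r => 1 - φ r) 1 := continuousAt_const.sub hφc
  have h3 : Filter.Tendsto (fun r => Real.sqrt (1 - φ r))
      (nhdsWithin 1 (Set.Ioi 1)) (nhds 0) := by
    have h := ((Real.continuous_sqrt.continuousAt.comp hsub).continuousWithinAt (s := Set.Ioi 1)).tendsto
    simpa [hφ1, Function.comp_def] using h
  -- the explicit derivative expression
  set g : ℝ → ℝ := fun r =>
    (ψ r * r ^ (2 * n - 1) * r ^ (2 * n) -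
      F r * ((2 * n : ℕ) * r ^ (2 * n - 1))) / (r ^ (2 * n)) ^ 2 with hgdef
  have hgc : ContinuousAt g 1 := by
    apply ContinuousAt.div
    · exact ((hψ.continuousAt.mul (continuousAt_pow _ _)).mul (continuousAt_pow _ _)).sub
        ((hF 1).continuousAt.mul (continuousAt_const.mul (continuousAt_pow _ _)))
    · exact (continuousAt_pow _ _).pow _
    · simp
  have h4 : Filter.Tendsto (fun r => (1 - φ r) - r * deriv φ r / 2)
      (nhdsWithin 1 (Set.Ioi 1)) (nhds n) := by
    have hG : ContinuousAt (fun r => (1 - φ r) - r * g r / 2) 1 :=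
      hsub.sub ((continuousAt_id.mul hgc).div_const 2)
    have hGval : (1 - φ 1) - 1 * g 1 / 2 = (n : ℝ) := by
      simp [hgdef, hφ1, hψ1, hF1]
      ring
    have htend := (hG.continuousWithinAt (s := Set.Ioi 1)).tendsto
    rw [hGval] at htend
    refine htend.congr' ?_
    filter_upwards [self_mem_nhdsWithin] with r hr
    have hr0 : r ≠ 0 := ne_of_gt (lt_trans one_pos hr)
    rw [(hD r hr0).deriv]
  refine ⟨hφ1, hderiv1, h3, h4, ?_⟩
  rw [hderiv1]; ring
end
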